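/- Let (g, [·,·]) be a finite-dimensional Lie algebra with a nondegenerate skew-symmetric bilinear form ω satisfying ω([x,y],z) + ω([y,z],x) + ω([z,x],y) = 0 for all x,y,z. Define a bilinear product ∗ on g by the condition ω(x, y∗z) = ω([x,y], z) for all x (this determines y∗z uniquely by nondegeneracy). Then ∗ is a left-symmetric product on g whose associated commutator x∗y − y∗x equals the Lie bracket [x,y]. -/
import Mathlib


/-- (Chu) A symplectic Lie algebra carries a compatible left-symmetric product
defined by `ω(x, y∗z) = ω([x,y], z)`. -/
theorem symplectic_gives_lsa {F : Type*} [Field F] {g : Type*} [LieRing g]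
    [LieAlgebra F g] [FiniteDimensional F g]
    (ω : g →ₗ[F] g →ₗ[F] F)
    (hskew : ∀ x y : g, ω x y = - ω y x)
    (hnd : ∀ x : g, (∀ y : g, ω x y = 0) → x = 0)
    (hclosed : ∀ x y z : g, ω ⁅x, y⁆ z + ω ⁅y, z⁆ x + ω ⁅z, x⁆ y = 0)
    (mul : g →ₗ[F] g →ₗ[F] g)
    (hmul : ∀ x y z : g, ω x (mul y z) = ω ⁅x, y⁆ z) :
    (∀ x y z : g, mul (mul x y) z - mul x (mul y z)
        = mul (mul y x) z - mul y (mul x z))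
      ∧ ∀ x y : g, mul x y - mul y x = ⁅x, y⁆ := by
  have comm : ∀ x y : g, mul x y - mul y x = ⁅x, y⁆ := by
    intro x y
    have key : ∀ w : g, ω (mul x y - mul y x - ⁅x, y⁆) w = 0 := by
      intro w
      have hc := hclosed w x y
      have h1 : ω w (mul x y) = ω ⁅w, x⁆ y := hmul w x y
      have h2 : ω w (mul y x) = ω ⁅w, y⁆ x := hmul w y x
      have h3 : ω ⁅y, w⁆ x = - ω ⁅w, y⁆ x := by
        have h : ⁅y, w⁆ = -⁅w, y⁆ := by rw [← lie_skew]
        rw [h, map_neg, LinearMap.neg_apply]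
      have h4 : ω w ⁅x, y⁆ = - ω ⁅x, y⁆ w := hskew w ⁅x, y⁆
      have h5 : ω (mul x y - mul y x - ⁅x, y⁆) w
          = - ω w (mul x y - mul y x - ⁅x, y⁆) := hskew _ _
      rw [h5]
      simp only [map_sub]
      linear_combination -h1 + h2 + h4 - hc + h3
    exact sub_eq_zero.mp (hnd _ key)
  refine ⟨?_, comm⟩
  intro x y z
  have key : ∀ w : g,
      ω (mul (mul x y) z - mul x (mul y z)
        - (mul (mul y x) z - mul y (mul x z))) w = 0 := by
    intro w
    have e1 : ω w (mul (mul x y) z) = ω ⁅w, mul x y⁆ z := hmul _ _ _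
    have e3 : ω w (mul (mul y x) z) = ω ⁅w, mul y x⁆ z := hmul _ _ _
    have e2 : ω w (mul x (mul y z)) = ω ⁅⁅w, x⁆, y⁆ z := by
      rw [hmul, hmul]
    have e4 : ω w (mul y (mul x z)) = ω ⁅⁅w, y⁆, x⁆ z := by
      rw [hmul, hmul]
    have hb : ⁅w, mul x y⁆ - ⁅w, mul y x⁆ = ⁅⁅w, x⁆, y⁆ - ⁅⁅w, y⁆, x⁆ := by
      rw [← lie_sub, comm x y, leibniz_lie, ← lie_skew ⁅w, y⁆ x]
      abel
    have ed : ω ⁅w, mul x y⁆ z - ω ⁅w, mul y x⁆ z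
        = ω ⁅⁅w, x⁆, y⁆ z - ω ⁅⁅w, y⁆, x⁆ z := by
      have h := congrArg (fun v => ω v z) hb
      simpa [map_sub, LinearMap.sub_apply] using h
    have h5 : ω (mul (mul x y) z - mul x (mul y z)
        - (mul (mul y x) z - mul y (mul x z))) w
        = - ω w (mul (mul x y) z - mul x (mul y z)
          - (mul (mul y x) z - mul y (mul x z))) := hskew _ _
    rw [h5]
    simp only [map_sub]
    linear_combination -e1 + e2 + e3 - e4 - ed
  exact sub_eq_zero.mp (hnd _ key)
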